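/- Assume λ < 1 and that the step size satisfies 0 < γ < (1−λ)τ/(L+(1+λ)τ)². Set η = sqrt(1 − 2γτ(1−λ) + γ²(L+(1+λ)τ)²). Then 0 < η < 1, there exists a unique x* ∈ E with G(x*) = 0, and for every t ≥ 1 the SD-RED iterates satisfy ‖x^t − x*‖ ≤ η^t · ‖x⁰ − x*‖ + τσε · γ/(1−η). -/

import Mathlib

open scoped InnerProductSpace

lemma grad_mono_aux {n : ℕ} {g : EuclideanSpace ℝ (Fin n) → ℝ}
    {g' : EuclideanSpace ℝ (Fin n) → EuclideanSpace ℝ (Fin n)}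
    (hgconv : ConvexOn ℝ Set.univ g)
    (hgrad : ∀ x, HasGradientAt g (g' x) x) (x y : EuclideanSpace ℝ (Fin n)) :
    0 ≤ ⟪g' x - g' y, x - y⟫_ℝ := by
  set φ : ℝ → ℝ := fun t => g ((AffineMap.lineMap y x : ℝ →ᵃ[ℝ] _) t) with hφ
  have hφc : ConvexOn ℝ Set.univ φ := by
    have := hgconv.comp_affineMap (AffineMap.lineMap y x : ℝ →ᵃ[ℝ] _)
    rw [hφ]
    simpa [Set.preimage_univ, Function.comp_def] using this
  have hd : ∀ t : ℝ, HasDerivAt φ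
      (⟪g' ((AffineMap.lineMap y x : ℝ →ᵃ[ℝ] _) t), x - y⟫_ℝ) t := by
    intro t
    have hline : HasDerivAt (fun s : ℝ => (AffineMap.lineMap y x : ℝ →ᵃ[ℝ] _) s) (x - y) t := by
      simp only [AffineMap.lineMap_apply_module']
      simpa using ((hasDerivAt_id t).smul_const (x - y)).add_const y
    have hg : HasFDerivAt g
        (InnerProductSpace.toDual ℝ _ (g' ((AffineMap.lineMap y x : ℝ →ᵃ[ℝ] _) t)))
        ((AffineMap.lineMap y x : ℝ →ᵃ[ℝ] _) t) :=
      hasGradientAt_iff_hasFDerivAt.mp (hgrad _)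
    have := hg.comp_hasDerivAt t hline
    rw [hφ]
    simpa [InnerProductSpace.toDual_apply_apply, Function.comp_def] using this
  have h0 : ⟪g' y, x - y⟫_ℝ ≤ slope φ 0 1 := by
    have := hφc.le_slope_of_hasDerivAt (Set.mem_univ (0:ℝ)) (Set.mem_univ (1:ℝ))
      zero_lt_one (hd 0)
    simpa using this
  have h1 : slope φ 0 1 ≤ ⟪g' x, x - y⟫_ℝ := by
    have := hφc.slope_le_of_hasDerivAt (Set.mem_univ (0:ℝ)) (Set.mem_univ (1:ℝ))
      zero_lt_one (hd 1)
    simpa using this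
  have := h0.trans h1
  rw [inner_sub_left]
  linarith

set_option maxHeartbeats 1000000 in
/-- SD-RED with a mismatched prior under a contractive true prior (Theorem 1):
linear convergence to the unique zero of `G` up to an error proportional to `τσε`. -/
theorem sdred_contraction_error_bound {n : ℕ}
    (g : EuclideanSpace ℝ (Fin n) → ℝ)
    (g' D Dh G Gh : EuclideanSpace ℝ (Fin n) → EuclideanSpace ℝ (Fin n))
    (L lam σ ε τ γ η : ℝ)
    (hL : 0 < L)
    (hgconv : ConvexOn ℝ Set.univ g)
    (hgrad : ∀ x, HasGradientAt g (g' x) x)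
    (hgLip : ∀ x y, ‖g' x - g' y‖ ≤ L * ‖x - y‖)
    (hlam0 : 0 < lam) (hlam1 : lam < 1)
    (hD : ∀ x y, ‖D x - D y‖ ≤ lam * ‖x - y‖)
    (hσ : 0 < σ) (hε : 0 < ε)
    (hmis : ∀ x, ‖Dh x - D x‖ ≤ σ * ε)
    (hτ : 0 < τ)
    (hG : ∀ x, G x = g' x + τ • (x - D x))
    (hGh : ∀ x, Gh x = g' x + τ • (x - Dh x))
    (xs : ℕ → EuclideanSpace ℝ (Fin n))
    (hiter : ∀ k, xs (k + 1) = xs k - γ • Gh (xs k))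
    (hγ0 : 0 < γ) (hγ : γ < (1 - lam) * τ / (L + (1 + lam) * τ) ^ 2)
    (hη : η = Real.sqrt (1 - 2 * γ * τ * (1 - lam) + γ ^ 2 * (L + (1 + lam) * τ) ^ 2)) :
    0 < η ∧ η < 1 ∧ (∃! xstar : EuclideanSpace ℝ (Fin n), G xstar = 0) ∧
      ∀ xstar : EuclideanSpace ℝ (Fin n), G xstar = 0 →
        ∀ t : ℕ, 1 ≤ t →
          ‖xs t - xstar‖ ≤ η ^ t * ‖xs 0 - xstar‖ + τ * σ * ε * (γ / (1 - η)) := by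
  set M : ℝ := L + (1 + lam) * τ with hM
  have hM0 : 0 < M := by nlinarith
  have hMτ : τ * (1 - lam) < M := by nlinarith
  set C : ℝ := 1 - 2 * γ * τ * (1 - lam) + γ ^ 2 * M ^ 2 with hC
  have hγM : γ * M ^ 2 < (1 - lam) * τ := (lt_div_iff₀ (by positivity)).mp hγ
  have hC1 : C < 1 := by nlinarith
  have hC0 : 0 < C := by
    nlinarith [sq_nonneg (1 - γ * τ * (1 - lam)), pow_pos hγ0 2,
      mul_pos (pow_pos hγ0 2) (mul_pos (sub_pos.mpr hMτ) (by nlinarith : (0:ℝ) < M + τ * (1 - lam)))]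
  have hη0 : 0 < η := hη ▸ Real.sqrt_pos.mpr hC0
  have hηsq : η ^ 2 = C := by rw [hη]; exact Real.sq_sqrt hC0.le
  have hη1 : η < 1 := by nlinarith
  -- the contraction map
  set T : EuclideanSpace ℝ (Fin n) → EuclideanSpace ℝ (Fin n) := fun x => x - γ • G x with hT
  have hcontr : ∀ x y, ‖T x - T y‖ ≤ η * ‖x - y‖ := by
    intro x y
    have hGxy : G x - G y = (g' x - g' y) + τ • (x - y) - τ • (D x - D y) := by
      rw [hG, hG]; module
    have hnormG : ‖G x - G y‖ ≤ M * ‖x - y‖ := by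
      rw [hGxy]
      calc ‖(g' x - g' y) + τ • (x - y) - τ • (D x - D y)‖
          ≤ ‖(g' x - g' y) + τ • (x - y)‖ + ‖τ • (D x - D y)‖ := norm_sub_le _ _
        _ ≤ ‖g' x - g' y‖ + ‖τ • (x - y)‖ + ‖τ • (D x - D y)‖ := by
            gcongr; exact norm_add_le _ _
        _ ≤ L * ‖x - y‖ + τ * ‖x - y‖ + τ * (lam * ‖x - y‖) := by
            rw [norm_smul, norm_smul, Real.norm_eq_abs, abs_of_pos hτ]
            gcongr
            · exact hgLip x y
            · exact hD x y
        _ = M * ‖x - y‖ := by rw [hM]; ring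
    have hinner : τ * (1 - lam) * ‖x - y‖ ^ 2 ≤ ⟪G x - G y, x - y⟫_ℝ := by
      rw [hGxy, inner_sub_left, inner_add_left, real_inner_smul_left, real_inner_smul_left,
        real_inner_self_eq_norm_sq]
      have h1 := grad_mono_aux hgconv hgrad x y
      have h2 : ⟪D x - D y, x - y⟫_ℝ ≤ lam * ‖x - y‖ ^ 2 := by
        calc ⟪D x - D y, x - y⟫_ℝ ≤ ‖D x - D y‖ * ‖x - y‖ := real_inner_le_norm _ _
          _ ≤ lam * ‖x - y‖ * ‖x - y‖ := by
              gcongr; exact hD x y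
          _ = lam * ‖x - y‖ ^ 2 := by ring
      nlinarith [mul_le_mul_of_nonneg_left h2 hτ.le]
    have key : ‖T x - T y‖ ^ 2 ≤ η ^ 2 * ‖x - y‖ ^ 2 := by
      have hTsub : T x - T y = (x - y) - γ • (G x - G y) := by
        simp only [hT]; module
      have expand : ‖T x - T y‖ ^ 2
          = ‖x - y‖ ^ 2 - 2 * γ * ⟪G x - G y, x - y⟫_ℝ + γ ^ 2 * ‖G x - G y‖ ^ 2 := by
        rw [hTsub, norm_sub_sq_real, real_inner_smul_right, norm_smul, Real.norm_eq_abs,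
          abs_of_pos hγ0, real_inner_comm]
        ring
      have hGsq : ‖G x - G y‖ ^ 2 ≤ M ^ 2 * ‖x - y‖ ^ 2 := by
        nlinarith [norm_nonneg (G x - G y), norm_nonneg (x - y)]
      rw [expand, hηsq, hC]
      nlinarith [pow_pos hγ0 2]
    have h2 : (0:ℝ) ≤ η * ‖x - y‖ := by positivity
    nlinarith [norm_nonneg (T x - T y)]
  -- existence and uniqueness of the zero of G
  have hzero_iff : ∀ x, G x = 0 ↔ Function.IsFixedPt T x := by
    intro x
    simp only [Function.IsFixedPt, hT]
    constructor
    · intro h; rw [h, smul_zero, sub_zero]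
    · intro h
      have : γ • G x = 0 := by
        have := sub_eq_self.mp h
        exact this
      rcases smul_eq_zero.mp this with h' | h'
      · exact absurd h' hγ0.ne'
      · exact h'
  set K : NNReal := ⟨η, hη0.le⟩ with hK
  have hlip : LipschitzWith K T := by
    apply LipschitzWith.of_dist_le_mul
    intro x y
    rw [dist_eq_norm, dist_eq_norm]
    exact hcontr x y
  have hcw : ContractingWith K T := ⟨by exact_mod_cast hη1, hlip⟩
  have hfix := hcw.fixedPoint_isFixedPt
  have hexu : ∃! xstar : EuclideanSpace ℝ (Fin n), G xstar = 0 := by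
    refine ⟨ContractingWith.fixedPoint T hcw, (hzero_iff _).mpr hfix, fun y hy => ?_⟩
    exact hcw.fixedPoint_unique ((hzero_iff y).mp hy)
  refine ⟨hη0, hη1, hexu, ?_⟩
  intro xstar hxstar t _
  have hTfix : T xstar = xstar := (hzero_iff xstar).mp hxstar
  set B : ℝ := τ * σ * ε * (γ / (1 - η)) with hB
  have h1η : (0:ℝ) < 1 - η := by linarith
  have hBpos : 0 ≤ B := by positivity
  have hBrec : η * B + τ * σ * ε * γ = B := by
    rw [hB]; field_simp; ring
  have hstep : ∀ k, ‖xs (k + 1) - xstar‖ ≤ η * ‖xs k - xstar‖ + τ * σ * ε * γ := by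
    intro k
    have hsplit : xs (k + 1) - xstar
        = (T (xs k) - T xstar) + (γ * τ) • (Dh (xs k) - D (xs k)) := by
      rw [hiter k, hGh, hTfix]
      simp only [hT, hG]
      module
    rw [hsplit]
    calc ‖(T (xs k) - T xstar) + (γ * τ) • (Dh (xs k) - D (xs k))‖
        ≤ ‖T (xs k) - T xstar‖ + ‖(γ * τ) • (Dh (xs k) - D (xs k))‖ := norm_add_le _ _
      _ ≤ η * ‖xs k - xstar‖ + (γ * τ) * (σ * ε) := by
          gcongr
          · exact hcontr _ _
          · rw [norm_smul, Real.norm_eq_abs, abs_of_pos (by positivity)]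
            gcongr
            exact hmis _
      _ = η * ‖xs k - xstar‖ + τ * σ * ε * γ := by ring
  have hind : ∀ t : ℕ, ‖xs t - xstar‖ ≤ η ^ t * ‖xs 0 - xstar‖ + B := by
    intro t
    induction t with
    | zero => simpa using hBpos
    | succ k ih =>
        calc ‖xs (k + 1) - xstar‖ ≤ η * ‖xs k - xstar‖ + τ * σ * ε * γ := hstep k
          _ ≤ η * (η ^ k * ‖xs 0 - xstar‖ + B) + τ * σ * ε * γ := by
              gcongr
          _ = η ^ (k + 1) * ‖xs 0 - xstar‖ + (η * B + τ * σ * ε * γ) := by ring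
          _ = η ^ (k + 1) * ‖xs 0 - xstar‖ + B := by rw [hBrec]
  exact hind t
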